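/- arXiv:2505.09130 — 2 statements merged into one kernel-verified Lean document; each statement's English description precedes it below -/
import Mathlib

section
/- Let V₅ have basis e₄, e₂, e₀, e₋₂, e₋₄. Define the linear map φ : ℂ⁷ → Λ²V₅ sending (a₆, a₄, a₂, a₀, a₋₂, a₋₄, a₋₆) to a₆·e₄∧e₂ + 2a₄·e₄∧e₀ + a₂·(e₂∧e₀ + 3e₄∧e₋₂) + 2a₀·(e₂∧e₋₂ + 2e₄∧e₋₄) + a₋₂·(e₀∧e₋₂ + 3e₂∧e₋₄) + 2a₋₄·e₀∧e₋₄ + a₋₆·e₋₂∧e₋₄. Then φ(a) ∧ φ(a) = 0 in Λ⁴V₅ if and only if the following five quadrics vanish: a₆a₋₂ − 4a₄a₀ + 3a₂², a₆a₋₄ − 3a₄a₋₂ + 2a₂a₀, a₆a₋₆ − 9a₂a₋₂ + 8a₀², a₄a₋₆ − 3a₂a₋₄ + 2a₀a₋₂, a₂a₋₆ − 4a₀a₋₄ + 3a₋₂². -/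
open ExteriorAlgebra

section Helpers
variable {V : Type*} [AddCommGroup V] [Module ℂ V]


lemma gswap (a b : V) : ι ℂ b * ι ℂ a = -(ι ℂ a * ι ℂ b) :=
  eq_neg_of_add_eq_zero_left (by rw [add_comm]; exact ι_add_mul_swap a b)

lemma g12 (a b c d : V) : ι ℂ a * ι ℂ b * (ι ℂ c * ι ℂ d) = -(ι ℂ b * ι ℂ a * (ι ℂ c * ι ℂ d)) := by
  rw [gswap b a]; noncomm_ring

lemma g34 (a b c d : V) : ι ℂ a * ι ℂ b * (ι ℂ c * ι ℂ d) = -(ι ℂ a * ι ℂ b * (ι ℂ d * ι ℂ c)) := by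
  rw [gswap d c]; noncomm_ring

lemma g23 (a b c d : V) : ι ℂ a * ι ℂ b * (ι ℂ c * ι ℂ d) = -(ι ℂ a * ι ℂ c * (ι ℂ b * ι ℂ d)) := by
  have h : ι ℂ b * ι ℂ c = -(ι ℂ c * ι ℂ b) := gswap c b
  calc ι ℂ a * ι ℂ b * (ι ℂ c * ι ℂ d) = ι ℂ a * (ι ℂ b * ι ℂ c) * ι ℂ d := by noncomm_ring
    _ = ι ℂ a * (-(ι ℂ c * ι ℂ b)) * ι ℂ d := by rw [h]
    _ = -(ι ℂ a * ι ℂ c * (ι ℂ b * ι ℂ d)) := by noncomm_ring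

lemma gblock (a b c d : V) : ι ℂ c * ι ℂ d * (ι ℂ a * ι ℂ b) = ι ℂ a * ι ℂ b * (ι ℂ c * ι ℂ d) := by
  rw [g23 c d a b, g12 c a d b, g34 a c d b, g23 a c b d]; simp

lemma z1 (a b c : V) : ι ℂ a * ι ℂ b * (ι ℂ b * ι ℂ c) = 0 := by
  have : ι ℂ a * ι ℂ b * (ι ℂ b * ι ℂ c) = ι ℂ a * (ι ℂ b * ι ℂ b) * ι ℂ c := by noncomm_ring
  rw [this, ι_sq_zero]; simp

lemma z2 (a b c : V) : ι ℂ a * ι ℂ b * (ι ℂ a * ι ℂ c) = 0 := by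
  rw [g23 a b a c, ι_sq_zero]; simp

lemma z3 (a b c : V) : ι ℂ a * ι ℂ b * (ι ℂ c * ι ℂ a) = 0 := by
  rw [g34, z2]; simp

lemma z4 (a b c : V) : ι ℂ a * ι ℂ b * (ι ℂ c * ι ℂ b) = 0 := by
  rw [g34, z1]; simp

lemma key (e : Module.Basis (Fin 5) ℂ V) (a₆ a₄ a₂ a₀ am₂ am₄ am₆ : ℂ) :
    (a₆ • (ι ℂ (e 0) * ι ℂ (e 1)) + (2 * a₄) • (ι ℂ (e 0) * ι ℂ (e 2)) +
        a₂ • (ι ℂ (e 1) * ι ℂ (e 2) + (3 : ℂ) • (ι ℂ (e 0) * ι ℂ (e 3))) +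
        (2 * a₀) • (ι ℂ (e 1) * ι ℂ (e 3) + (2 : ℂ) • (ι ℂ (e 0) * ι ℂ (e 4))) +
        am₂ • (ι ℂ (e 2) * ι ℂ (e 3) + (3 : ℂ) • (ι ℂ (e 1) * ι ℂ (e 4))) +
        (2 * am₄) • (ι ℂ (e 2) * ι ℂ (e 4)) + am₆ • (ι ℂ (e 3) * ι ℂ (e 4))) *
      (a₆ • (ι ℂ (e 0) * ι ℂ (e 1)) + (2 * a₄) • (ι ℂ (e 0) * ι ℂ (e 2)) +
        a₂ • (ι ℂ (e 1) * ι ℂ (e 2) + (3 : ℂ) • (ι ℂ (e 0) * ι ℂ (e 3))) +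
        (2 * a₀) • (ι ℂ (e 1) * ι ℂ (e 3) + (2 : ℂ) • (ι ℂ (e 0) * ι ℂ (e 4))) +
        am₂ • (ι ℂ (e 2) * ι ℂ (e 3) + (3 : ℂ) • (ι ℂ (e 1) * ι ℂ (e 4))) +
        (2 * am₄) • (ι ℂ (e 2) * ι ℂ (e 4)) + am₆ • (ι ℂ (e 3) * ι ℂ (e 4))) =
    (2 * (a₆ * am₂ - 4 * a₄ * a₀ + 3 * a₂ ^ 2)) • (ι ℂ (e 0) * ι ℂ (e 1) * (ι ℂ (e 2) * ι ℂ (e 3))) +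
    (4 * (a₆ * am₄ - 3 * a₄ * am₂ + 2 * a₂ * a₀)) • (ι ℂ (e 0) * ι ℂ (e 1) * (ι ℂ (e 2) * ι ℂ (e 4))) +
    (2 * (a₆ * am₆ - 9 * a₂ * am₂ + 8 * a₀ ^ 2)) • (ι ℂ (e 0) * ι ℂ (e 1) * (ι ℂ (e 3) * ι ℂ (e 4))) +
    (4 * (a₄ * am₆ - 3 * a₂ * am₄ + 2 * a₀ * am₂)) • (ι ℂ (e 0) * ι ℂ (e 2) * (ι ℂ (e 3) * ι ℂ (e 4))) +
    (2 * (a₂ * am₆ - 4 * a₀ * am₄ + 3 * am₂ ^ 2)) • (ι ℂ (e 1) * ι ℂ (e 2) * (ι ℂ (e 3) * ι ℂ (e 4))) := by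
  simp only [smul_add, add_mul, mul_add, smul_mul_assoc, mul_smul_comm, smul_smul,
    z1, z2, z3, z4, smul_zero, add_zero, zero_add,
    gblock (e 0) (e 1) (e 2) (e 3), gblock (e 0) (e 2) (e 1) (e 3), gblock (e 0) (e 3) (e 1) (e 2),
    g23 (e 0) (e 2) (e 1) (e 3), g23 (e 0) (e 3) (e 1) (e 2), g34 (e 0) (e 1) (e 3) (e 2),
    gblock (e 0) (e 1) (e 2) (e 4), gblock (e 0) (e 2) (e 1) (e 4), gblock (e 0) (e 4) (e 1) (e 2),
    g23 (e 0) (e 2) (e 1) (e 4), g23 (e 0) (e 4) (e 1) (e 2), g34 (e 0) (e 1) (e 4) (e 2),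
    gblock (e 0) (e 1) (e 3) (e 4), gblock (e 0) (e 3) (e 1) (e 4), gblock (e 0) (e 4) (e 1) (e 3),
    g23 (e 0) (e 3) (e 1) (e 4), g23 (e 0) (e 4) (e 1) (e 3), g34 (e 0) (e 1) (e 4) (e 3),
    gblock (e 0) (e 2) (e 3) (e 4), gblock (e 0) (e 3) (e 2) (e 4), gblock (e 0) (e 4) (e 2) (e 3),
    g23 (e 0) (e 3) (e 2) (e 4), g23 (e 0) (e 4) (e 2) (e 3), g34 (e 0) (e 2) (e 4) (e 3),
    gblock (e 1) (e 2) (e 3) (e 4), gblock (e 1) (e 3) (e 2) (e 4), gblock (e 1) (e 4) (e 2) (e 3),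
    g23 (e 1) (e 3) (e 2) (e 4), g23 (e 1) (e 4) (e 2) (e 3), g34 (e 1) (e 2) (e 4) (e 3),
    smul_neg]
  module

noncomputable def F (e : Module.Basis (Fin 5) ℂ V) (S : Fin 4 → Fin 5) : V [⋀^Fin 4]→ₗ[ℂ] ℂ :=
  Matrix.detRowAlternating.compLinearMap (LinearMap.pi fun j => e.coord (S j))

noncomputable def fam (e : Module.Basis (Fin 5) ℂ V) (S : Fin 4 → Fin 5) :
    ∀ i : ℕ, V [⋀^Fin i]→ₗ[ℂ] ℂ
  | 4 => F e S
  | 0 => 0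
  | 1 => 0
  | 2 => 0
  | 3 => 0
  | (n+5) => 0

lemma prod4 (v : Fin 4 → V) :
    ι ℂ (v 0) * ι ℂ (v 1) * (ι ℂ (v 2) * ι ℂ (v 3)) = ιMulti ℂ 4 v := by
  simp [ιMulti_apply, List.ofFn_succ, mul_assoc, Matrix.vecTail]

lemma evalW (e : Module.Basis (Fin 5) ℂ V) (S T : Fin 4 → Fin 5) :
    liftAlternating (fam e S) (ιMulti ℂ 4 fun r => e (T r)) =
      Matrix.det (Matrix.of fun r c => if S c = T r then (1:ℂ) else 0) := by
  rw [liftAlternating_apply_ιMulti]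
  show F e S _ = _
  rw [show (F e S) (fun r => e (T r)) =
      Matrix.det (Matrix.of fun r c => e.coord (S c) (e (T r))) from rfl]
  congr 1
  ext r c
  simp only [Module.Basis.coord_apply, Module.Basis.repr_self, Finsupp.single_apply, Matrix.of_apply, eq_comm]

lemma evalW_same (e : Module.Basis (Fin 5) ℂ V) (S : Fin 4 → Fin 5)
    (hd : ∀ r c : Fin 4, S c = S r ↔ r = c) :
    liftAlternating (fam e S) (ιMulti ℂ 4 fun r => e (S r)) = 1 := by
  rw [evalW]
  have h1 : (Matrix.of fun r c => if S c = S r then (1:ℂ) else 0) = 1 := by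
    ext r c
    by_cases h : r = c
    · simp [h, Matrix.one_apply]
    · have hne : ¬ S c = S r := fun hh => h ((hd r c).mp hh)
      simp [Matrix.one_apply, h, hne]
  rw [h1, Matrix.det_one]

lemma evalW_ne (e : Module.Basis (Fin 5) ℂ V) (S T : Fin 4 → Fin 5) (r₀ : Fin 4)
    (h : ∀ c, ¬ S c = T r₀) :
    liftAlternating (fam e S) (ιMulti ℂ 4 fun r => e (T r)) = 0 := by
  rw [evalW]
  exact Matrix.det_eq_zero_of_row_eq_zero r₀ fun c => by simp [Matrix.of_apply, h c]



end Helpers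

set_option maxHeartbeats 2000000 in
/-- With basis `e 0 = e₄, e 1 = e₂, e 2 = e₀, e 3 = e₋₂, e 4 = e₋₄` of `V₅`, the bivector
`φ(a) = a₆·e₄∧e₂ + 2a₄·e₄∧e₀ + a₂·(e₂∧e₀ + 3e₄∧e₋₂) + 2a₀·(e₂∧e₋₂ + 2e₄∧e₋₄)
 + a₋₂·(e₀∧e₋₂ + 3e₂∧e₋₄) + 2a₋₄·e₀∧e₋₄ + a₋₆·e₋₂∧e₋₄`
satisfies `φ(a) ∧ φ(a) = 0` iff the five quadrics vanish. -/
theorem stmt_4 (V : Type*) [AddCommGroup V] [Module ℂ V] (e : Module.Basis (Fin 5) ℂ V)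
    (a₆ a₄ a₂ a₀ am₂ am₄ am₆ : ℂ) :
    (a₆ • (ι ℂ (e 0) * ι ℂ (e 1)) + (2 * a₄) • (ι ℂ (e 0) * ι ℂ (e 2)) +
        a₂ • (ι ℂ (e 1) * ι ℂ (e 2) + (3 : ℂ) • (ι ℂ (e 0) * ι ℂ (e 3))) +
        (2 * a₀) • (ι ℂ (e 1) * ι ℂ (e 3) + (2 : ℂ) • (ι ℂ (e 0) * ι ℂ (e 4))) +
        am₂ • (ι ℂ (e 2) * ι ℂ (e 3) + (3 : ℂ) • (ι ℂ (e 1) * ι ℂ (e 4))) +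
        (2 * am₄) • (ι ℂ (e 2) * ι ℂ (e 4)) + am₆ • (ι ℂ (e 3) * ι ℂ (e 4))) *
      (a₆ • (ι ℂ (e 0) * ι ℂ (e 1)) + (2 * a₄) • (ι ℂ (e 0) * ι ℂ (e 2)) +
        a₂ • (ι ℂ (e 1) * ι ℂ (e 2) + (3 : ℂ) • (ι ℂ (e 0) * ι ℂ (e 3))) +
        (2 * a₀) • (ι ℂ (e 1) * ι ℂ (e 3) + (2 : ℂ) • (ι ℂ (e 0) * ι ℂ (e 4))) +
        am₂ • (ι ℂ (e 2) * ι ℂ (e 3) + (3 : ℂ) • (ι ℂ (e 1) * ι ℂ (e 4))) +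
        (2 * am₄) • (ι ℂ (e 2) * ι ℂ (e 4)) + am₆ • (ι ℂ (e 3) * ι ℂ (e 4))) = 0 ↔
    (a₆ * am₂ - 4 * a₄ * a₀ + 3 * a₂ ^ 2 = 0 ∧
     a₆ * am₄ - 3 * a₄ * am₂ + 2 * a₂ * a₀ = 0 ∧
     a₆ * am₆ - 9 * a₂ * am₂ + 8 * a₀ ^ 2 = 0 ∧
     a₄ * am₆ - 3 * a₂ * am₄ + 2 * a₀ * am₂ = 0 ∧
     a₂ * am₆ - 4 * a₀ * am₄ + 3 * am₂ ^ 2 = 0) := by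
  rw [key e a₆ a₄ a₂ a₀ am₂ am₄ am₆]
  have W1 : ι ℂ (e 0) * ι ℂ (e 1) * (ι ℂ (e 2) * ι ℂ (e 3)) =
      ιMulti ℂ 4 fun r => e (![0,1,2,3] r) := by simpa using prod4 fun r => e (![0,1,2,3] r)
  have W2 : ι ℂ (e 0) * ι ℂ (e 1) * (ι ℂ (e 2) * ι ℂ (e 4)) =
      ιMulti ℂ 4 fun r => e (![0,1,2,4] r) := by simpa using prod4 fun r => e (![0,1,2,4] r)
  have W3 : ι ℂ (e 0) * ι ℂ (e 1) * (ι ℂ (e 3) * ι ℂ (e 4)) =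
      ιMulti ℂ 4 fun r => e (![0,1,3,4] r) := by simpa using prod4 fun r => e (![0,1,3,4] r)
  have W4 : ι ℂ (e 0) * ι ℂ (e 2) * (ι ℂ (e 3) * ι ℂ (e 4)) =
      ιMulti ℂ 4 fun r => e (![0,2,3,4] r) := by simpa using prod4 fun r => e (![0,2,3,4] r)
  have W5 : ι ℂ (e 1) * ι ℂ (e 2) * (ι ℂ (e 3) * ι ℂ (e 4)) =
      ιMulti ℂ 4 fun r => e (![1,2,3,4] r) := by simpa using prod4 fun r => e (![1,2,3,4] r)
  rw [W1, W2, W3, W4, W5]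
  constructor
  · intro h
    have h1 := congrArg (liftAlternating (fam e ![0,1,2,3])) h
    have h2 := congrArg (liftAlternating (fam e ![0,1,2,4])) h
    have h3 := congrArg (liftAlternating (fam e ![0,1,3,4])) h
    have h4 := congrArg (liftAlternating (fam e ![0,2,3,4])) h
    have h5 := congrArg (liftAlternating (fam e ![1,2,3,4])) h
    simp only [map_add, map_smul, map_zero, smul_eq_mul,
      evalW_same e ![0,1,2,3] (by decide), evalW_same e ![0,1,2,4] (by decide),
      evalW_same e ![0,1,3,4] (by decide), evalW_same e ![0,2,3,4] (by decide),
      evalW_same e ![1,2,3,4] (by decide),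
      evalW_ne e ![0,1,2,3] ![0,1,2,4] 3 (by decide),
      evalW_ne e ![0,1,2,3] ![0,1,3,4] 3 (by decide),
      evalW_ne e ![0,1,2,3] ![0,2,3,4] 3 (by decide),
      evalW_ne e ![0,1,2,3] ![1,2,3,4] 3 (by decide),
      evalW_ne e ![0,1,2,4] ![0,1,2,3] 3 (by decide),
      evalW_ne e ![0,1,2,4] ![0,1,3,4] 2 (by decide),
      evalW_ne e ![0,1,2,4] ![0,2,3,4] 2 (by decide),
      evalW_ne e ![0,1,2,4] ![1,2,3,4] 2 (by decide),
      evalW_ne e ![0,1,3,4] ![0,1,2,3] 2 (by decide),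
      evalW_ne e ![0,1,3,4] ![0,1,2,4] 2 (by decide),
      evalW_ne e ![0,1,3,4] ![0,2,3,4] 1 (by decide),
      evalW_ne e ![0,1,3,4] ![1,2,3,4] 1 (by decide),
      evalW_ne e ![0,2,3,4] ![0,1,2,3] 1 (by decide),
      evalW_ne e ![0,2,3,4] ![0,1,2,4] 1 (by decide),
      evalW_ne e ![0,2,3,4] ![0,1,3,4] 1 (by decide),
      evalW_ne e ![0,2,3,4] ![1,2,3,4] 0 (by decide),
      evalW_ne e ![1,2,3,4] ![0,1,2,3] 0 (by decide),
      evalW_ne e ![1,2,3,4] ![0,1,2,4] 0 (by decide),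
      evalW_ne e ![1,2,3,4] ![0,1,3,4] 0 (by decide),
      evalW_ne e ![1,2,3,4] ![0,2,3,4] 0 (by decide),
      mul_one, mul_zero, add_zero, zero_add] at h1 h2 h3 h4 h5
    exact ⟨by linear_combination h1 / 2, by linear_combination h2 / 4,
      by linear_combination h3 / 2, by linear_combination h4 / 4,
      by linear_combination h5 / 2⟩
  · rintro ⟨h1, h2, h3, h4, h5⟩
    rw [h1, h2, h3, h4, h5]
    simp
end

section
/- Let V be an n-dimensional complex vector space with basis e₁, …, e_n, and let a torus ℂ* act diagonally with pairwise distinct integer weights w₁, …, w_n. Suppose that every integer occurs at most twice in the multiset {w_i + w_j : 1 ≤ i < j ≤ n}. If W ⊂ V is a 2-dimensional subspace whose line Λ²W ⊂ Λ²V is fixed by the induced ℂ*-action, then W = span(e_i, e_j) for some i < j. -/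
open ExteriorAlgebra

section Aux

variable {n : ℕ} {V : Type*} [AddCommGroup V] [Module ℂ V]

/-- The alternating map extracting the `(i,j)` minor of two vectors' coordinates. -/
noncomputable def minorAlt (e : Module.Basis (Fin n) ℂ V) (i j : Fin n) : V [⋀^Fin 2]→ₗ[ℂ] ℂ :=
  (Matrix.detRowAlternating : AlternatingMap ℂ (Fin 2 → ℂ) ℂ (Fin 2)).compLinearMap
    (LinearMap.pi ![e.coord i, e.coord j])

noncomputable def minorFam (e : Module.Basis (Fin n) ℂ V) (i j : Fin n) :
    ∀ k : ℕ, V [⋀^Fin k]→ₗ[ℂ] ℂ :=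
  fun k => match k with
  | 2 => minorAlt e i j
  | _ => 0

noncomputable def Fmap (e : Module.Basis (Fin n) ℂ V) (i j : Fin n) :
    ExteriorAlgebra ℂ V →ₗ[ℂ] ℂ :=
  liftAlternating (minorFam e i j)

lemma Fmap_ι_mul_ι (e : Module.Basis (Fin n) ℂ V) (i j : Fin n) (v u : V) :
    Fmap e i j (ι ℂ v * ι ℂ u)
      = e.repr v i * e.repr u j - e.repr v j * e.repr u i := by
  rw [Fmap, liftAlternating_ι_mul, liftAlternating_ι]
  show (minorFam e i j 2).curryLeft v ![u] = _
  show minorAlt e i j (Matrix.vecCons v ![u]) = _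
  have h : minorAlt e i j (Matrix.vecCons v ![u])
      = Matrix.det (Matrix.of fun k =>
          LinearMap.pi ![e.coord i, e.coord j] (Matrix.vecCons v ![u] k)) := rfl
  rw [h, Matrix.det_fin_two]
  simp [LinearMap.pi_apply]

lemma planeAux1 {V : Type*} [AddCommGroup V] [Module ℂ V] (u v : V) (p q r s : ℂ)
    (h : p * s - q * r ≠ 0) :
    u = (s / (p * s - q * r)) • (p • u + q • v) - (q / (p * s - q * r)) • (r • u + s • v) := by
  have h' : s * p - q * r ≠ 0 := by rwa [mul_comm s p]
  match_scalars <;> field_simp <;> ring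

lemma planeAux2 {V : Type*} [AddCommGroup V] [Module ℂ V] (u v : V) (p q r s : ℂ)
    (h : p * s - q * r ≠ 0) :
    v = (p / (p * s - q * r)) • (r • u + s • v) - (r / (p * s - q * r)) • (p • u + q • v) := by
  match_scalars <;> field_simp <;> ring

end Aux

/-- Let `V` be `n`-dimensional over `ℂ` with basis `e` and a diagonal `ℂ*`-action with
pairwise distinct integer weights `w i` (so `t` acts by `e i ↦ t^(w i) • e i`). If every
integer occurs at most twice among the sums `w i + w j` (`i < j`), then any
2-dimensional subspace `W = span{x, y}` whose line `Λ²W` is fixed by the induced action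
is a coordinate plane `span{e i, e j}`. -/
theorem stmt_16 (n : ℕ) (V : Type*) [AddCommGroup V] [Module ℂ V]
    (e : Module.Basis (Fin n) ℂ V) (w : Fin n → ℤ) (hw : Function.Injective w)
    (hmult : ∀ m : ℤ,
      (Finset.univ.filter
        (fun q : Fin n × Fin n => q.1 < q.2 ∧ w q.1 + w q.2 = m)).card ≤ 2)
    (ρ : ℂˣ → V →ₗ[ℂ] V)
    (hρ : ∀ (t : ℂˣ) (i : Fin n), ρ t (e i) = ((t ^ w i : ℂˣ) : ℂ) • e i)
    (W : Submodule ℂ V) (hW : Module.finrank ℂ W = 2)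
    (x y : V) (hxy : W = Submodule.span ℂ {x, y})
    (hfix : ∀ t : ℂˣ, ∃ c : ℂ,
      ι ℂ (ρ t x) * ι ℂ (ρ t y) = c • (ι ℂ x * ι ℂ y)) :
    ∃ i j : Fin n, i < j ∧ W = Submodule.span ℂ {e i, e j} := by
  classical
  haveI : Module.Finite ℂ V := Module.Finite.of_basis e
  -- coordinates of the action
  have hrepr : ∀ (t : ℂˣ) (v : V) (k : Fin n),
      e.repr (ρ t v) k = (t : ℂ) ^ (w k) * e.repr v k := by
    intro t v k
    have hv : ρ t v = ∑ p, ((t : ℂ) ^ (w p) * e.repr v p) • e p := by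
      conv_lhs => rw [← e.sum_repr v]
      rw [map_sum]
      refine Finset.sum_congr rfl fun p _ => ?_
      rw [map_smul, hρ, smul_smul, Units.val_zpow_eq_zpow_val, mul_comm]
    rw [hv, map_sum]
    simp [Finsupp.single_apply]
  -- the key coefficient relation
  have key : ∀ (t : ℂˣ) (c : ℂ),
      ι ℂ (ρ t x) * ι ℂ (ρ t y) = c • (ι ℂ x * ι ℂ y) →
      ∀ k l : Fin n, (t : ℂ) ^ (w k + w l) * (e.repr x k * e.repr y l - e.repr x l * e.repr y k)
        = c * (e.repr x k * e.repr y l - e.repr x l * e.repr y k) := by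
    intro t c hc k l
    have h1 := congrArg (Fmap e k l) hc
    rw [map_smul, smul_eq_mul, Fmap_ι_mul_ι, Fmap_ι_mul_ι] at h1
    simp only [hrepr] at h1
    rw [zpow_add₀ (Units.ne_zero t)]
    linear_combination h1
  -- injectivity of 2^· on ℤ
  have h2inj : ∀ m₁ m₂ : ℤ, (2 : ℂ) ^ m₁ = (2 : ℂ) ^ m₂ → m₁ = m₂ := by
    intro m₁ m₂ h
    have h' := congrArg (fun z : ℂ => ‖z‖) h
    simp only [norm_zpow, Complex.norm_two] at h'
    exact zpow_right_injective₀ (by norm_num) (by norm_num) h'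
  obtain ⟨c₀, hc₀⟩ := hfix (Units.mk0 (2 : ℂ) two_ne_zero)
  have keyt := key (Units.mk0 (2 : ℂ) two_ne_zero) c₀ hc₀
  simp only [Units.val_mk0] at keyt
  -- some minor is nonzero
  have hex : ∃ i j : Fin n, i < j ∧
      e.repr x i * e.repr y j - e.repr x j * e.repr y i ≠ 0 := by
    by_contra hcon
    push_neg at hcon
    have hall : ∀ k l : Fin n, e.repr x k * e.repr y l = e.repr x l * e.repr y k := by
      intro k l
      rcases lt_trichotomy k l with h | rfl | h
      · exact sub_eq_zero.mp (hcon k l h)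
      · rfl
      · exact (sub_eq_zero.mp (hcon l k h)).symm
    have hdep : (∃ c : ℂ, y = c • x) ∨ (∃ c : ℂ, x = c • y) := by
      by_cases hx0 : ∀ k, e.repr x k = 0
      · right
        refine ⟨0, ?_⟩
        rw [zero_smul]
        apply e.repr.injective
        ext k
        simp [hx0 k]
      · left
        push_neg at hx0
        obtain ⟨k, hk⟩ := hx0
        refine ⟨e.repr y k / e.repr x k, ?_⟩
        apply e.repr.injective
        ext l
        rw [map_smul, Finsupp.smul_apply, smul_eq_mul,
          div_mul_eq_mul_div, eq_div_iff hk]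
        linear_combination hall k l
    have hle1 : Module.finrank ℂ W ≤ 1 := by
      obtain ⟨c, hc⟩ | ⟨c, hc⟩ := hdep
      · have hle : W ≤ Submodule.span ℂ {x} := by
          rw [hxy, Submodule.span_le, Set.insert_subset_iff, Set.singleton_subset_iff]
          refine ⟨Submodule.mem_span_singleton_self x, ?_⟩
          rw [hc]
          exact Submodule.smul_mem _ _ (Submodule.mem_span_singleton_self x)
        refine le_trans (Submodule.finrank_mono hle) ?_
        rcases eq_or_ne x 0 with rfl | hx
        · rw [Submodule.span_zero_singleton]
          simp
        · rw [finrank_span_singleton hx]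
      · have hle : W ≤ Submodule.span ℂ {y} := by
          rw [hxy, Submodule.span_le, Set.insert_subset_iff, Set.singleton_subset_iff]
          refine ⟨?_, Submodule.mem_span_singleton_self y⟩
          rw [hc]
          exact Submodule.smul_mem _ _ (Submodule.mem_span_singleton_self y)
        refine le_trans (Submodule.finrank_mono hle) ?_
        rcases eq_or_ne y 0 with rfl | hy
        · rw [Submodule.span_zero_singleton]
          simp
        · rw [finrank_span_singleton hy]
    omega
  obtain ⟨i, j, hij, hd⟩ := hex
  -- every nonzero minor has the same weight sum
  have hsum : ∀ k l : Fin n,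
      (e.repr x k * e.repr y l - e.repr x l * e.repr y k) ≠ 0 →
      w k + w l = w i + w j := by
    intro k l h
    have h2 : (2 : ℂ) ^ (w k + w l) = c₀ := mul_right_cancel₀ h (keyt k l)
    have h3 : (2 : ℂ) ^ (w i + w j) = c₀ := mul_right_cancel₀ hd (keyt i j)
    exact h2inj _ _ (h2.trans h3.symm)
  -- only the (i,j) minor can be nonzero
  have hclass : ∀ k l : Fin n,
      (e.repr x k * e.repr y l - e.repr x l * e.repr y k) ≠ 0 →
      (k = i ∧ l = j) ∨ (k = j ∧ l = i) := by
    intro k l h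
    have hwsum := hsum k l h
    by_cases hki : k = i
    · subst hki
      exact Or.inl ⟨rfl, hw (show w l = w j by omega)⟩
    by_cases hkj : k = j
    · subst hkj
      exact Or.inr ⟨rfl, hw (show w l = w i by omega)⟩
    exfalso
    by_cases hli : l = i
    · subst hli
      exact hkj (hw (show w k = w j by omega))
    by_cases hlj : l = j
    · subst hlj
      exact hki (hw (show w k = w i by omega))
    -- now i, j, k, l are pairwise distinct: use the Plücker relation
    have h1 : e.repr x i * e.repr y k - e.repr x k * e.repr y i = 0 := by
      by_contra h1
      have := hsum i k h1
      exact hkj (hw (show w k = w j by omega))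
    have h2 : e.repr x i * e.repr y l - e.repr x l * e.repr y i = 0 := by
      by_contra h2
      have := hsum i l h2
      exact hlj (hw (show w l = w j by omega))
    have hpl : (e.repr x i * e.repr y j - e.repr x j * e.repr y i) *
        (e.repr x k * e.repr y l - e.repr x l * e.repr y k) = 0 := by
      linear_combination (e.repr x j * e.repr y l - e.repr x l * e.repr y j) * h1
        - (e.repr x j * e.repr y k - e.repr x k * e.repr y j) * h2
    exact h ((mul_eq_zero.mp hpl).resolve_left hd)
  -- coordinates outside {i, j} vanish
  have hcoord : ∀ k : Fin n, k ≠ i → k ≠ j → e.repr x k = 0 ∧ e.repr y k = 0 := by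
    intro k hki hkj
    have h1 : e.repr x i * e.repr y k - e.repr x k * e.repr y i = 0 := by
      by_contra h1
      rcases hclass i k h1 with ⟨_, rfl⟩ | ⟨hii, _⟩
      · exact hkj rfl
      · exact absurd hii (ne_of_lt hij)
    have h2 : e.repr x j * e.repr y k - e.repr x k * e.repr y j = 0 := by
      by_contra h2
      rcases hclass j k h2 with ⟨hji, _⟩ | ⟨_, rfl⟩
      · exact absurd hji (ne_of_gt hij)
      · exact hki rfl
    constructor
    · have h3 : (e.repr x i * e.repr y j - e.repr x j * e.repr y i) * e.repr x k = 0 := by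
        linear_combination (e.repr x j) * h1 - (e.repr x i) * h2
      exact (mul_eq_zero.mp h3).resolve_left hd
    · have h4 : (e.repr x i * e.repr y j - e.repr x j * e.repr y i) * e.repr y k = 0 := by
        linear_combination (e.repr y j) * h1 - (e.repr y i) * h2
      exact (mul_eq_zero.mp h4).resolve_left hd
  -- x and y lie in the coordinate plane
  have hx2 : x = e.repr x i • e i + e.repr x j • e j := by
    apply e.repr.injective
    ext k
    rw [map_add, map_smul, map_smul, Module.Basis.repr_self, Module.Basis.repr_self]
    rw [Finsupp.add_apply, Finsupp.smul_apply, Finsupp.smul_apply,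
      Finsupp.single_apply, Finsupp.single_apply]
    by_cases hki : k = i
    · subst hki
      simp [(ne_of_lt hij).symm]
    by_cases hkj : k = j
    · subst hkj
      simp [ne_of_lt hij]
    · simp [Ne.symm hki, Ne.symm hkj, (hcoord k hki hkj).1]
  have hy2 : y = e.repr y i • e i + e.repr y j • e j := by
    apply e.repr.injective
    ext k
    rw [map_add, map_smul, map_smul, Module.Basis.repr_self, Module.Basis.repr_self]
    rw [Finsupp.add_apply, Finsupp.smul_apply, Finsupp.smul_apply,
      Finsupp.single_apply, Finsupp.single_apply]
    by_cases hki : k = i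
    · subst hki
      simp [(ne_of_lt hij).symm]
    by_cases hkj : k = j
    · subst hkj
      simp [ne_of_lt hij]
    · simp [Ne.symm hki, Ne.symm hkj, (hcoord k hki hkj).2]
  have hxW : x ∈ W := by
    rw [hxy]
    exact Submodule.subset_span (Set.mem_insert _ _)
  have hyW : y ∈ W := by
    rw [hxy]
    exact Submodule.subset_span (Set.mem_insert_of_mem _ rfl)
  have hei := planeAux1 (e i) (e j) (e.repr x i) (e.repr x j) (e.repr y i) (e.repr y j) hd
  rw [← hx2, ← hy2] at hei
  have hej := planeAux2 (e i) (e j) (e.repr x i) (e.repr x j) (e.repr y i) (e.repr y j) hd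
  rw [← hx2, ← hy2] at hej
  refine ⟨i, j, hij, le_antisymm ?_ ?_⟩
  · rw [hxy, Submodule.span_le, Set.insert_subset_iff, Set.singleton_subset_iff]
    exact ⟨Submodule.mem_span_pair.mpr ⟨e.repr x i, e.repr x j, hx2.symm⟩,
      Submodule.mem_span_pair.mpr ⟨e.repr y i, e.repr y j, hy2.symm⟩⟩
  · rw [Submodule.span_le, Set.insert_subset_iff, Set.singleton_subset_iff]
    constructor
    · rw [hei]
      exact Submodule.sub_mem _ (Submodule.smul_mem _ _ hxW) (Submodule.smul_mem _ _ hyW)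
    · rw [hej]
      exact Submodule.sub_mem _ (Submodule.smul_mem _ _ hyW) (Submodule.smul_mem _ _ hxW)
end
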